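/- Let 0 < q < 1, x₀ > 0, and T' = (Γ(1 + q)·x₀)^{1/q}. For every T > T' there is no continuously differentiable function x : [0, T] → ℝ with x(0) = x₀ such that D_*^q x(t) = 2 − 3·sign(x(t)) for all t ∈ (0, T]. That is, the classical solution of the discontinuous fractional initial value problem D_*^q x = 2 − 3·sign(x), x(0) = x₀ > 0, cannot be extended to any interval larger than [0, T'). -/

import Mathlib

open Set intervalIntegral MeasureTheory

lemma measurable_rpow_const' (p : ℝ) : Measurable (fun x : ℝ => x ^ p) :=
  measurable_of_continuousOn_compl_singleton 0 (fun x hx =>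
    (Real.continuousAt_rpow_const x p (Or.inl hx)).continuousWithinAt)

lemma ker_ii {p : ℝ} (hp : -1 < p) (t : ℝ) :
    IntervalIntegrable (fun τ => (t - τ) ^ p) volume 0 t := by
  have h := (intervalIntegral.intervalIntegrable_rpow' (a := 0) (b := t) hp).comp_sub_left t
  simpa using h.symm

lemma ker_mul_ii {p : ℝ} (hp : -1 < p) (t : ℝ) {y : ℝ → ℝ} (hy : Continuous y) :
    IntervalIntegrable (fun τ => (t - τ) ^ p * y τ) volume 0 t :=
  (ker_ii hp t).mul_continuousOn hy.continuousOn

lemma real_beta {q : ℝ} (hq0 : 0 < q) (hq1 : q < 1) :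
    ∫ v in (0:ℝ)..1, v ^ (-q) * (1 - v) ^ (q - 1) = Real.Gamma (1 - q) * Real.Gamma q := by
  have h1 : Complex.Gamma (1 - q) * Complex.Gamma q
      = Complex.betaIntegral (1 - (q:ℂ)) q := by
    have h := Complex.Gamma_mul_Gamma_eq_betaIntegral (s := 1 - (q:ℂ)) (t := (q:ℂ))
      (by simp [Complex.sub_re]; linarith) (by simpa using hq0)
    simpa using h
  have h2 : Complex.betaIntegral (1 - (q:ℂ)) q
      = ((∫ v in (0:ℝ)..1, v ^ (-q) * (1 - v) ^ (q - 1) : ℝ) : ℂ) := by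
    rw [Complex.betaIntegral, ← intervalIntegral.integral_ofReal]
    apply intervalIntegral.integral_congr
    intro v hv
    rw [uIcc_of_le zero_le_one] at hv
    have h0v : (0:ℝ) ≤ v := hv.1
    have hv1 : (0:ℝ) ≤ 1 - v := by linarith [hv.2]
    show (v:ℂ) ^ (1 - (q:ℂ) - 1) * (1 - (v:ℂ)) ^ ((q:ℂ) - 1)
        = ((v ^ (-q) * (1 - v) ^ (q - 1) : ℝ) : ℂ)
    rw [Complex.ofReal_mul, Complex.ofReal_cpow h0v, Complex.ofReal_cpow hv1]
    push_cast
    norm_num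
  have h3 : ((Real.Gamma (1 - q) * Real.Gamma q : ℝ) : ℂ)
      = ((∫ v in (0:ℝ)..1, v ^ (-q) * (1 - v) ^ (q - 1) : ℝ) : ℂ) := by
    rw [← h2, ← h1]
    push_cast [← Complex.Gamma_ofReal]
    norm_num
  exact_mod_cast h3.symm

lemma beta_conv {q : ℝ} (hq0 : 0 < q) (hq1 : q < 1) {τ s : ℝ} (hτ : 0 ≤ τ) (hτs : τ < s) :
    ∫ t in τ..s, (s - t) ^ (q - 1) * (t - τ) ^ (-q)
      = Real.Gamma q * Real.Gamma (1 - q) := by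
  have hc0 : 0 < s - τ := by linarith
  have h1 : ∫ t in τ..s, (s - t) ^ (q - 1) * (t - τ) ^ (-q)
      = ∫ u in (0:ℝ)..(s - τ), (s - τ - u) ^ (q - 1) * u ^ (-q) := by
    have h := intervalIntegral.integral_comp_add_right (a := 0) (b := s - τ)
      (fun t => (s - t) ^ (q - 1) * (t - τ) ^ (-q)) τ
    rw [zero_add, sub_add_cancel] at h
    rw [← h]
    apply intervalIntegral.integral_congr
    intro u _
    show (s - (u + τ)) ^ (q - 1) * (u + τ - τ) ^ (-q) = (s - τ - u) ^ (q - 1) * u ^ (-q)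
    have e1 : s - (u + τ) = s - τ - u := by ring
    have e2 : u + τ - τ = u := by ring
    rw [e1, e2]
  have h2 : ∫ u in (0:ℝ)..(s - τ), (s - τ - u) ^ (q - 1) * u ^ (-q)
      = ∫ v in (0:ℝ)..1, v ^ (-q) * (1 - v) ^ (q - 1) := by
    set c := s - τ with hc
    have h := intervalIntegral.smul_integral_comp_mul_right (a := (0:ℝ)) (b := 1)
      (fun u => (c - u) ^ (q - 1) * u ^ (-q)) c
    rw [zero_mul, one_mul] at h
    rw [← h, ← intervalIntegral.integral_smul]
    apply intervalIntegral.integral_congr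
    intro v hv
    rw [uIcc_of_le zero_le_one] at hv
    have h0v : (0:ℝ) ≤ v := hv.1
    have hv1 : (0:ℝ) ≤ 1 - v := by linarith [hv.2]
    show c • ((c - v * c) ^ (q - 1) * (v * c) ^ (-q)) = v ^ (-q) * (1 - v) ^ (q - 1)
    have e1 : c - v * c = c * (1 - v) := by ring
    rw [e1, Real.mul_rpow hc0.le hv1, Real.mul_rpow h0v hc0.le, smul_eq_mul]
    have ecc : c * (c ^ (q - 1) * (1 - v) ^ (q - 1) * (v ^ (-q) * c ^ (-q)))
        = (c ^ (1:ℝ) * c ^ (q - 1) * c ^ (-q)) * ((1 - v) ^ (q - 1) * v ^ (-q)) := by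
      rw [Real.rpow_one]; ring
    rw [ecc, ← Real.rpow_add hc0, ← Real.rpow_add hc0]
    norm_num
    ring
  rw [h1, h2, real_beta hq0 hq1]
  ring

lemma ker_integral {q : ℝ} (hq0 : 0 < q) (hq1 : q < 1) {t : ℝ} (ht : 0 ≤ t) :
    ∫ τ in (0:ℝ)..t, (t - τ) ^ (-q) = t ^ (1 - q) / (1 - q) := by
  have h := intervalIntegral.integral_comp_sub_left (a := 0) (b := t)
    (fun u => u ^ (-q)) t
  rw [sub_zero, sub_self] at h
  rw [h, integral_rpow (Or.inl (by linarith)), Real.zero_rpow (by linarith : -q + 1 ≠ 0)]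
  rw [show -q + 1 = 1 - q by ring]
  ring

lemma abel_fubini {q s M : ℝ} (hq0 : 0 < q) (hq1 : q < 1) (hs : 0 < s)
    {y : ℝ → ℝ} (hy : Continuous y) (hM : ∀ u, |y u| ≤ M) :
    (∫ t in (0:ℝ)..s, (s - t) ^ (q - 1) * ∫ τ in (0:ℝ)..t, (t - τ) ^ (-q) * y τ)
      = (Real.Gamma q * Real.Gamma (1 - q)) * ∫ τ in (0:ℝ)..s, y τ := by
  have hM0 : 0 ≤ M := le_trans (abs_nonneg _) (hM 0)
  set μ := volume.restrict (Ioc (0:ℝ) s) with hμ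
  set f : ℝ → ℝ → ℝ := fun t τ => (s - t) ^ (q - 1) * ((t - τ) ^ (-q) * y τ) with hf
  set G : ℝ → ℝ → ℝ := fun t τ => Set.indicator (Iio t) (f t) τ with hG
  -- measurability
  have hfm : Measurable (Function.uncurry f) := by
    exact (((measurable_rpow_const' (q-1)).comp (measurable_const.sub measurable_fst))).mul
      ((((measurable_rpow_const' (-q)).comp (measurable_fst.sub measurable_snd))).mul
        (hy.measurable.comp measurable_snd))
  have hGeq : Function.uncurry G
      = Set.indicator {p : ℝ × ℝ | p.2 < p.1} (Function.uncurry f) := by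
    funext p
    rcases p with ⟨t, τ⟩
    simp only [Function.uncurry_apply_pair, hG, Set.indicator_apply, mem_Iio,
      Set.mem_setOf_eq]
  have hGmeas : Measurable (Function.uncurry G) := by
    rw [hGeq]
    exact hfm.indicator (measurableSet_lt measurable_snd measurable_fst)
  have hGm : AEStronglyMeasurable (Function.uncurry G) (μ.prod μ) :=
    hGmeas.aestronglyMeasurable
  -- set identities
  have hset1 : ∀ t ∈ Ioc (0:ℝ) s, Iio t ∩ Ioc 0 s = Ioo 0 t := by
    intro t ht
    ext τ
    simp only [mem_inter_iff, mem_Iio, mem_Ioc, mem_Ioo]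
    constructor
    · rintro ⟨h1, h2, h3⟩; exact ⟨h2, h1⟩
    · rintro ⟨h1, h2⟩; exact ⟨h2, h1, le_trans h2.le ht.2⟩
  have hset2 : ∀ τ ∈ Ioo (0:ℝ) s, Ioi τ ∩ Ioc 0 s = Ioc τ s := by
    intro τ hτ
    ext t
    simp only [mem_inter_iff, mem_Ioi, mem_Ioc]
    constructor
    · rintro ⟨h1, h2, h3⟩; exact ⟨h1, h3⟩
    · rintro ⟨h1, h2⟩; exact ⟨h1, lt_trans hτ.1 h1, h2⟩
  -- integrability in τ for fixed t
  have hii : ∀ t ∈ Ioc (0:ℝ) s, IntervalIntegrable (f t) volume 0 t := by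
    intro t ht
    exact (ker_mul_ii (by linarith) t hy).const_mul _
  have hInt : ∀ t ∈ Ioc (0:ℝ) s, Integrable (G t) μ := by
    intro t ht
    rw [hG]
    rw [integrable_indicator_iff measurableSet_Iio]
    unfold μ
    rw [IntegrableOn, Measure.restrict_restrict measurableSet_Iio, hset1 t ht]
    exact (((intervalIntegrable_iff_integrableOn_Ioc_of_le ht.1.le).mp
      (hii t ht)).mono_set Ioo_subset_Ioc_self)
  -- value of inner integral in τ
  have eq_t : ∀ t ∈ Ioc (0:ℝ) s,
      (∫ τ, G t τ ∂μ) = (s - t) ^ (q - 1) * ∫ τ in (0:ℝ)..t, (t - τ) ^ (-q) * y τ := by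
    intro t ht
    rw [hG]
    simp only
    rw [MeasureTheory.integral_indicator measurableSet_Iio]
    unfold μ
    rw [Measure.restrict_restrict measurableSet_Iio, hset1 t ht,
      ← integral_Ioc_eq_integral_Ioo, ← intervalIntegral.integral_of_le ht.1.le,
      ← intervalIntegral.integral_const_mul]
  -- value of inner integral in t
  have eq_τ : ∀ τ ∈ Ioo (0:ℝ) s,
      (∫ t, G t τ ∂μ) = (Real.Gamma q * Real.Gamma (1 - q)) * y τ := by
    intro τ hτ
    have h1 : (fun t => G t τ) = Set.indicator (Ioi τ) (fun t => f t τ) := by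
      funext t
      simp only [hG, Set.indicator_apply, mem_Iio, mem_Ioi]
    rw [h1, MeasureTheory.integral_indicator measurableSet_Ioi]
    unfold μ
    rw [Measure.restrict_restrict measurableSet_Ioi, hset2 τ hτ,
      ← intervalIntegral.integral_of_le hτ.2.le]
    have h2 : (∫ t in τ..s, f t τ)
        = (∫ t in τ..s, (s - t) ^ (q - 1) * (t - τ) ^ (-q)) * y τ := by
      rw [← intervalIntegral.integral_mul_const]
      apply intervalIntegral.integral_congr
      intro t _
      show f t τ = (s - t) ^ (q - 1) * (t - τ) ^ (-q) * y τ
      rw [hf]; ring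
    rw [h2, beta_conv hq0 hq1 hτ.1.le hτ.2]
  -- product integrability
  have hprod : Integrable (Function.uncurry G) (μ.prod μ) := by
    rw [integrable_prod_iff hGm]
    constructor
    · filter_upwards [ae_restrict_mem measurableSet_Ioc] with t ht
      exact hInt t ht
    · apply Integrable.mono' (g := fun t => (s - t) ^ (q - 1) * (M * (s ^ (1 - q) / (1 - q))))
      · unfold μ
        rw [← IntegrableOn, ← intervalIntegrable_iff_integrableOn_Ioc_of_le hs.le]
        exact (ker_ii (by linarith) s).mul_const _
      · exact hGm.norm.integral_prod_right'
      · filter_upwards [ae_restrict_mem measurableSet_Ioc] with t ht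
        simp only [Function.uncurry_apply_pair]
        have h0 : (0:ℝ) ≤ ∫ τ, ‖G t τ‖ ∂μ := integral_nonneg fun τ => norm_nonneg _
        rw [Real.norm_eq_abs, abs_of_nonneg h0]
        have hst : (0:ℝ) ≤ s - t := by linarith [ht.2]
        have hnorm : (fun τ => ‖G t τ‖) = Set.indicator (Iio t) (fun τ => ‖f t τ‖) := by
          funext τ
          rw [hG]
          simp only
          rw [norm_indicator_eq_indicator_norm]
        rw [hnorm, MeasureTheory.integral_indicator measurableSet_Iio]
        unfold μ
        rw [Measure.restrict_restrict measurableSet_Iio, hset1 t ht]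
        have key : (∫ τ in Ioo (0:ℝ) t, ‖f t τ‖)
            ≤ ∫ τ in Ioo (0:ℝ) t, (s - t) ^ (q - 1) * ((t - τ) ^ (-q) * M) := by
          apply setIntegral_mono_on
          · exact (((intervalIntegrable_iff_integrableOn_Ioc_of_le ht.1.le).mp
              (hii t ht)).mono_set Ioo_subset_Ioc_self).norm
          · refine (((intervalIntegrable_iff_integrableOn_Ioc_of_le ht.1.le).mp
              ?_).mono_set Ioo_subset_Ioc_self)
            exact ((ker_ii (by linarith) t).mul_const M).const_mul _
          · exact measurableSet_Ioo
          · intro τ hτ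
            have htτ : (0:ℝ) ≤ t - τ := by linarith [hτ.2]
            rw [hf]
            simp only
            rw [Real.norm_eq_abs, abs_mul, abs_mul,
              abs_of_nonneg (Real.rpow_nonneg hst _),
              abs_of_nonneg (Real.rpow_nonneg htτ _)]
            exact mul_le_mul_of_nonneg_left (mul_le_mul_of_nonneg_left (hM τ)
              (Real.rpow_nonneg htτ _)) (Real.rpow_nonneg hst _)
        refine le_trans key ?_
        rw [MeasureTheory.integral_const_mul]
        apply mul_le_mul_of_nonneg_left _ (Real.rpow_nonneg hst _)
        rw [MeasureTheory.integral_mul_const, ← integral_Ioc_eq_integral_Ioo,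
          ← intervalIntegral.integral_of_le ht.1.le, ker_integral hq0 hq1 ht.1.le]
        rw [mul_comm M]
        apply mul_le_mul_of_nonneg_right _ hM0
        apply div_le_div_of_nonneg_right ?_ (by linarith)
        · exact Real.rpow_le_rpow ht.1.le ht.2 (by linarith)
  -- swap
  have hswap := MeasureTheory.integral_integral_swap (f := G) (μ := μ) (ν := μ) hprod
  -- LHS
  have hLHS : (∫ t in (0:ℝ)..s, (s - t) ^ (q - 1) * ∫ τ in (0:ℝ)..t, (t - τ) ^ (-q) * y τ)
      = ∫ t, (∫ τ, G t τ ∂μ) ∂μ := by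
    rw [intervalIntegral.integral_of_le hs.le]
    apply MeasureTheory.integral_congr_ae
    filter_upwards [ae_restrict_mem measurableSet_Ioc] with t ht
    rw [eq_t t ht]
  have hsnull : ∀ᵐ τ ∂μ, τ ≠ s := by
    rw [ae_iff]
    have : {τ | ¬ τ ≠ s} = {s} := by ext τ; simp
    rw [this]
    unfold μ
    exact le_antisymm (le_trans (Measure.restrict_le_self _) (by simp)) zero_le'
  have hRHS : (∫ τ, (∫ t, G t τ ∂μ) ∂μ)
      = (Real.Gamma q * Real.Gamma (1 - q)) * ∫ τ in (0:ℝ)..s, y τ := by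
    have h1 : (∫ τ, (∫ t, G t τ ∂μ) ∂μ)
        = ∫ τ, (Real.Gamma q * Real.Gamma (1 - q)) * y τ ∂μ := by
      apply MeasureTheory.integral_congr_ae
      filter_upwards [ae_restrict_mem measurableSet_Ioc, hsnull] with τ hτ hne
      exact eq_τ τ ⟨hτ.1, lt_of_le_of_ne hτ.2 hne⟩
    rw [h1, MeasureTheory.integral_const_mul, intervalIntegral.integral_of_le hs.le]
  rw [hLHS, hswap, hRHS]

lemma caputo_cont {q M : ℝ} (hq0 : 0 < q) (hq1 : q < 1) {y : ℝ → ℝ}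
    (hy : Continuous y) (hM : ∀ u, |y u| ≤ M) :
    ContinuousOn (fun t => ∫ τ in (0:ℝ)..t, (t - τ) ^ (-q) * y τ) (Ioi (0:ℝ)) := by
  have hΦ : Continuous fun t => ∫ u in (0:ℝ)..1, (1 - u) ^ (-q) * y (t * u) := by
    apply intervalIntegral.continuous_of_dominated_interval
      (bound := fun u => (1 - u) ^ (-q) * M)
    · intro t
      exact (((measurable_rpow_const' (-q)).comp (measurable_const.sub measurable_id)).mul
        (hy.measurable.comp (measurable_id.const_mul t))).aestronglyMeasurable
    · intro t
      filter_upwards with u hu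
      rw [uIoc_of_le zero_le_one] at hu
      have h1 : (0:ℝ) ≤ (1 - u) ^ (-q) := Real.rpow_nonneg (by linarith [hu.2]) _
      rw [Real.norm_eq_abs, abs_mul, abs_of_nonneg h1]
      exact mul_le_mul_of_nonneg_left (hM _) h1
    · have h := (intervalIntegral.intervalIntegrable_rpow' (a := 0) (b := 1)
        (by linarith : (-1:ℝ) < -q)).comp_sub_left 1
      simpa using (h.symm.mul_const M)
    · filter_upwards with u _
      exact continuous_const.mul (hy.comp (continuous_id.mul continuous_const))
  have key : ∀ t ∈ Ioi (0:ℝ), (∫ τ in (0:ℝ)..t, (t - τ) ^ (-q) * y τ)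
      = t ^ (1 - q) * ∫ u in (0:ℝ)..1, (1 - u) ^ (-q) * y (t * u) := by
    intro t ht
    have ht0 : (0:ℝ) < t := ht
    have h := intervalIntegral.smul_integral_comp_mul_right (a := (0:ℝ)) (b := 1)
      (fun τ => (t - τ) ^ (-q) * y τ) t
    rw [zero_mul, one_mul] at h
    rw [← h]
    have h2 : (∫ u in (0:ℝ)..1, (t - u * t) ^ (-q) * y (u * t))
        = ∫ u in (0:ℝ)..1, t ^ (-q) * ((1 - u) ^ (-q) * y (t * u)) := by
      apply intervalIntegral.integral_congr
      intro u hu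
      rw [uIcc_of_le zero_le_one] at hu
      show (t - u * t) ^ (-q) * y (u * t) = t ^ (-q) * ((1 - u) ^ (-q) * y (t * u))
      have e1 : t - u * t = t * (1 - u) := by ring
      rw [e1, Real.mul_rpow ht0.le (by linarith [hu.2]), mul_comm u t]
      ring
    rw [h2, intervalIntegral.integral_const_mul, smul_eq_mul, ← mul_assoc]
    congr 1
    nth_rewrite 1 [← Real.rpow_one t]
    rw [← Real.rpow_add ht0]
    ring_nf
  refine ContinuousOn.congr (ContinuousOn.mul ?_ hΦ.continuousOn) key
  intro t ht
  exact (Real.continuousAt_rpow_const t (1 - q) (Or.inl (ne_of_gt ht))).continuousWithinAt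

/-- For `x₀ > 0` and `T' = (Γ(1+q)·x₀)^(1/q)`, the classical solution of the
discontinuous fractional IVP `D_*^q x = 2 - 3·sign(x)`, `x(0) = x₀`, cannot be extended
to any interval `[0, T]` with `T > T'`. Here `x'` denotes the (continuous) derivative of
`x` on `[0, T]` and the Caputo derivative is `(1/Γ(1-q)) ∫_0^t (t-τ)^(-q) x'(τ) dτ`. -/
theorem no_extension_beyond_T' (q x₀ T' : ℝ) (hq0 : 0 < q) (hq1 : q < 1) (hx₀ : 0 < x₀)
    (hT' : T' = (Real.Gamma (1 + q) * x₀) ^ (1 / q)) :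
    ∀ T : ℝ, T' < T →
      ¬ ∃ x x' : ℝ → ℝ,
          x 0 = x₀ ∧
          (∀ t ∈ Set.Icc (0 : ℝ) T, HasDerivWithinAt x (x' t) (Set.Icc (0 : ℝ) T) t) ∧
          ContinuousOn x' (Set.Icc (0 : ℝ) T) ∧
          ∀ t ∈ Set.Ioc (0 : ℝ) T,
            (1 / Real.Gamma (1 - q)) * ∫ τ in (0 : ℝ)..t, (t - τ) ^ (-q) * x' τ
              = 2 - 3 * Real.sign (x t) := by
  intro T hT
  rintro ⟨x, x', hx0, hderiv, hx'c, heq⟩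
  -- basic positivity
  have hΓ1q : 0 < Real.Gamma (1 - q) := Real.Gamma_pos_of_pos (by linarith)
  have hΓq : 0 < Real.Gamma q := Real.Gamma_pos_of_pos hq0
  have hA : 0 < Real.Gamma (1 + q) * x₀ :=
    mul_pos (Real.Gamma_pos_of_pos (by linarith)) hx₀
  have hT'pos : 0 < T' := hT' ▸ Real.rpow_pos_of_pos hA _
  have hTpos : 0 < T := lt_trans hT'pos hT
  -- continuity of x
  have hxcont : ContinuousOn x (Icc 0 T) := fun t ht => (hderiv t ht).continuousWithinAt
  -- the extension y of x'
  set proj : ℝ → ℝ := fun u => max (min u T) 0 with hproj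
  have hprojmem : ∀ u, proj u ∈ Icc (0:ℝ) T := by
    intro u
    constructor
    · exact le_max_right _ _
    · exact max_le (le_trans (min_le_right _ _) le_rfl) hTpos.le
  have hprojid : ∀ u ∈ Icc (0:ℝ) T, proj u = u := by
    intro u hu
    rw [hproj]
    simp only
    rw [min_eq_left hu.2, max_eq_left hu.1]
  have hprojcont : Continuous proj := (continuous_id.min continuous_const).max continuous_const
  set y : ℝ → ℝ := fun u => x' (proj u) with hy'
  have hy : Continuous y := hx'c.comp_continuous hprojcont hprojmem
  have hyx : ∀ u ∈ Icc (0:ℝ) T, y u = x' u := by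
    intro u hu
    show x' (proj u) = x' u
    rw [hprojid u hu]
  obtain ⟨M, hMb⟩ := isCompact_Icc.exists_bound_of_continuousOn hx'c
  have hM : ∀ u, |y u| ≤ M := fun u => hMb (proj u) (hprojmem u)
  -- F and its properties
  set F : ℝ → ℝ := fun t => ∫ τ in (0:ℝ)..t, (t - τ) ^ (-q) * y τ with hF
  have hFeq : ∀ t ∈ Ioc (0:ℝ) T,
      (∫ τ in (0:ℝ)..t, (t - τ) ^ (-q) * x' τ) = F t := by
    intro t ht
    apply intervalIntegral.integral_congr
    intro τ hτ
    rw [uIcc_of_le ht.1.le] at hτ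
    show (t - τ) ^ (-q) * x' τ = (t - τ) ^ (-q) * y τ
    rw [hyx τ ⟨hτ.1, le_trans hτ.2 ht.2⟩]
  have hFcont : ContinuousOn F (Ioi 0) := caputo_cont hq0 hq1 hy hM
  -- sign is continuous on Ioc 0 T
  have hsigncont : ContinuousOn (fun t => Real.sign (x t)) (Ioc (0:ℝ) T) := by
    apply ContinuousOn.congr (f := fun t => (2 - (1 / Real.Gamma (1 - q)) * F t) / 3)
    · apply ContinuousOn.div_const
      apply ContinuousOn.sub continuousOn_const
      exact continuousOn_const.mul (hFcont.mono (fun u (hu : u ∈ Ioc (0:ℝ) T) => hu.1))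
    · intro t ht
      have h := heq t ht
      rw [hFeq t ht] at h
      show Real.sign (x t) = (2 - 1 / Real.Gamma (1 - q) * F t) / 3
      rw [h]
      ring
  -- x is positive near 0
  have hx00 : 0 < x 0 := hx0 ▸ hx₀
  have hev : ∀ᶠ v in nhdsWithin 0 (Icc (0:ℝ) T), 0 < x v :=
    (hxcont 0 ⟨le_refl 0, hTpos.le⟩) (Ioi_mem_nhds hx00)
  obtain ⟨ε, hε, hball⟩ := Metric.mem_nhdsWithin_iff.mp hev
  set t₁ : ℝ := min (ε / 2) T with ht₁def
  have ht₁pos : 0 < t₁ := lt_min (by linarith) hTpos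
  have ht₁T : t₁ ≤ T := min_le_right _ _
  have ht₁pt : ∀ u ∈ Icc (0:ℝ) t₁, 0 < x u := by
    intro u hu
    apply hball
    constructor
    · rw [Metric.mem_ball, Real.dist_eq, sub_zero, abs_of_nonneg hu.1]
      calc u ≤ t₁ := hu.2
        _ ≤ ε / 2 := min_le_left _ _
        _ < ε := by linarith
    · exact ⟨hu.1, le_trans hu.2 ht₁T⟩
  -- sign is constantly 1
  have hsign1 : ∀ t ∈ Ioc (0:ℝ) T, Real.sign (x t) = 1 := by
    intro t ht
    by_contra hne
    have hsignt1 : Real.sign (x t₁) = 1 := Real.sign_of_pos (ht₁pt t₁ ⟨ht₁pos.le, le_refl _⟩)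
    have htt₁ : t₁ < t := by
      rcases le_or_gt t t₁ with h | h
      · exact absurd (Real.sign_of_pos (ht₁pt t ⟨ht.1.le, h⟩)) hne
      · exact h
    have hsub : Icc t₁ t ⊆ Ioc (0:ℝ) T := fun u hu => ⟨lt_of_lt_of_le ht₁pos hu.1,
      le_trans hu.2 ht.2⟩
    have hIVT := intermediate_value_Icc' htt₁.le ((hsigncont.mono hsub))
    have hmem : (1/2 : ℝ) ∈ Icc (Real.sign (x t)) (Real.sign (x t₁)) := by
      rw [hsignt1]
      constructor
      · rcases lt_trichotomy (x t) 0 with h | h | h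
        · rw [Real.sign_of_neg h]; norm_num
        · rw [h, Real.sign_zero]; norm_num
        · exact absurd (Real.sign_of_pos h) hne
      · norm_num
    obtain ⟨c, _, hc⟩ := hIVT hmem
    have hc' : Real.sign (x c) = 1/2 := hc
    rcases lt_trichotomy (x c) 0 with h | h | h
    · rw [Real.sign_of_neg h] at hc'; norm_num at hc'
    · rw [h, Real.sign_zero] at hc'; norm_num at hc'
    · rw [Real.sign_of_pos h] at hc'; norm_num at hc'
  -- F is constant -Γ(1-q)
  have hFval : ∀ t ∈ Ioc (0:ℝ) T, F t = -Real.Gamma (1 - q) := by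
    intro t ht
    have h := heq t ht
    rw [hFeq t ht, hsign1 t ht] at h
    have hne : Real.Gamma (1 - q) ≠ 0 := ne_of_gt hΓ1q
    field_simp at h
    linarith
  -- FTC
  have hftc : ∫ τ in (0:ℝ)..T, y τ = x T - x₀ := by
    have h1 : ∫ τ in (0:ℝ)..T, y τ = ∫ τ in (0:ℝ)..T, x' τ := by
      apply intervalIntegral.integral_congr
      intro τ hτ
      rw [uIcc_of_le hTpos.le] at hτ
      exact hyx τ hτ
    rw [h1, intervalIntegral.integral_eq_sub_of_hasDeriv_right_of_le hTpos.le hxcont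
      (fun t ht => ((hderiv t ⟨ht.1.le, ht.2.le⟩).hasDerivAt
        (Icc_mem_nhds ht.1 ht.2)).hasDerivWithinAt)
      (hx'c.intervalIntegrable_of_Icc hTpos.le), hx0]
  -- Fubini
  have hfub := abel_fubini hq0 hq1 hTpos hy hM
  have hlhs : (∫ t in (0:ℝ)..T, (T - t) ^ (q - 1) * F t)
      = -Real.Gamma (1 - q) * (T ^ q / q) := by
    have h1 : (∫ t in (0:ℝ)..T, (T - t) ^ (q - 1) * F t)
        = ∫ t in (0:ℝ)..T, (T - t) ^ (q - 1) * (-Real.Gamma (1 - q)) := by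
      apply intervalIntegral.integral_congr_ae
      filter_upwards with t ht
      rw [uIoc_of_le hTpos.le] at ht
      rw [hFval t ht]
    rw [h1, intervalIntegral.integral_mul_const]
    have h2 : ∫ t in (0:ℝ)..T, (T - t) ^ (q - 1) = T ^ q / q := by
      have h := intervalIntegral.integral_comp_sub_left (a := 0) (b := T)
        (fun u => u ^ (q - 1)) T
      rw [sub_zero, sub_self] at h
      rw [h, integral_rpow (Or.inl (by linarith)), Real.zero_rpow (by linarith : q - 1 + 1 ≠ 0)]
      rw [show q - 1 + 1 = q by ring]
      ring
    rw [h2]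
    ring
  rw [hftc, hlhs] at hfub
  -- final contradiction
  have hxT : 0 < x T := by
    have h := hsign1 T ⟨hTpos, le_refl _⟩
    rcases lt_trichotomy (x T) 0 with h' | h' | h'
    · rw [Real.sign_of_neg h'] at h; norm_num at h
    · rw [h', Real.sign_zero] at h; norm_num at h
    · exact h'
  -- T'^q = Γ(1+q) x₀ = q Γ(q) x₀
  have hT'q : T' ^ q = Real.Gamma (1 + q) * x₀ := by
    rw [hT', ← Real.rpow_mul hA.le, one_div_mul_cancel (ne_of_gt hq0), Real.rpow_one]
  have hΓadd : Real.Gamma (1 + q) = q * Real.Gamma q := by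
    rw [add_comm, Real.Gamma_add_one (ne_of_gt hq0)]
  have hTq : T' ^ q < T ^ q := Real.rpow_lt_rpow hT'pos.le hT hq0
  -- hfub : -Γ(1-q) * (T^q/q) = Γq * Γ(1-q) * (x T - x₀)
  have hkey : Real.Gamma q * (x T - x₀) = -(T ^ q / q) := by
    have h3 : Real.Gamma (1 - q) * (Real.Gamma q * (x T - x₀))
        = Real.Gamma (1 - q) * (-(T ^ q / q)) := by nlinarith [hfub]
    exact mul_left_cancel₀ (ne_of_gt hΓ1q) h3
  have hcontr : x T < 0 := by
    have h4 : q * Real.Gamma q * x₀ < T ^ q := by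
      rw [← hΓadd, ← hT'q]; exact hTq
    have h5 : q * (Real.Gamma q * (x T - x₀)) = -(T ^ q) := by
      rw [hkey]; field_simp
    nlinarith [mul_pos hq0 hΓq, h4, h5]
  linarith
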